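/- With p_n(x) = (−1)^n e^x A^n(e^{−x}), the derivative satisfies p_n′(x) = −Σ_{k=0}^{n−1} C(2n, 2k)·p_k(x) for every n ≥ 1. -/

import Mathlib

open Real

/-- The operator `(A f)(x) = x² f(x) − x (x f′(x))′`. -/
noncomputable def opA (f : ℝ → ℝ) : ℝ → ℝ :=
  fun x => x^2 * f x - x * deriv (fun y => y * deriv f y) x

/-- `p_n(x) = (−1)^n e^x (Aⁿ e^{−x})(x)`. -/
noncomputable def p (n : ℕ) (x : ℝ) : ℝ :=
  (-1:ℝ)^n * Real.exp x * (opA^[n] (fun y => Real.exp (-y))) x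

open Finset Polynomial


open Finset

/-- Sum of odd-index and even-index binomial coefficients of an odd number. -/
lemma choose_odd_sums (d : ℕ) :
    (∑ i ∈ range (d+1), (2*d+1).choose (2*i+1) = 4^d) ∧
    (∑ i ∈ range (d+1), (2*d+1).choose (2*i) = 4^d) := by
  induction d with
  | zero => simp
  | succ d ih =>
    obtain ⟨h1, h2⟩ := ih
    -- shifted even sum for 2d+1
    have hshift : (∑ i ∈ range (d+1), (2*d+1).choose (2*i+2)) + 1 = 4^d := by
      have e1 : ∑ i ∈ range (d+2), (2*d+1).choose (2*i)
          = (∑ i ∈ range (d+1), (2*d+1).choose (2*(i+1))) + (2*d+1).choose 0 :=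
        Finset.sum_range_succ' _ _
      have e2 : ∑ i ∈ range (d+2), (2*d+1).choose (2*i)
          = (∑ i ∈ range (d+1), (2*d+1).choose (2*i)) + (2*d+1).choose (2*(d+1)) :=
        Finset.sum_range_succ _ _
      have e3 : (2*d+1).choose (2*(d+1)) = 0 := Nat.choose_eq_zero_of_lt (by omega)
      have e4 : (∑ i ∈ range (d+1), (2*d+1).choose (2*(i+1)))
          = ∑ i ∈ range (d+1), (2*d+1).choose (2*i+2) :=
        Finset.sum_congr rfl (fun i _ => by ring_nf)
      simp only [Nat.choose_zero_right] at e1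
      omega
    -- even sum for 2d+2 over range (d+2)
    have hEE : ∑ i ∈ range (d+2), (2*d+2).choose (2*i) = 2 * 4^d := by
      have e1 : ∑ i ∈ range (d+2), (2*d+2).choose (2*i)
          = (∑ i ∈ range (d+1), (2*d+2).choose (2*(i+1))) + (2*d+2).choose 0 :=
        Finset.sum_range_succ' _ _
      have e4 : (∑ i ∈ range (d+1), (2*d+2).choose (2*(i+1)))
          = ∑ i ∈ range (d+1), ((2*d+1).choose (2*i+1) + (2*d+1).choose (2*i+2)) := by
        refine Finset.sum_congr rfl (fun i _ => ?_)
        rw [show 2*(i+1) = (2*i+1)+1 by ring, show 2*d+2 = (2*d+1)+1 by ring,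
          Nat.choose_succ_succ']
      rw [e4, Finset.sum_add_distrib, h1] at e1
      simp only [Nat.choose_zero_right] at e1
      omega
    -- odd sum for 2d+2 over range (d+1)
    have hEO : ∑ i ∈ range (d+1), (2*d+2).choose (2*i+1) = 2 * 4^d := by
      have e4 : (∑ i ∈ range (d+1), (2*d+2).choose (2*i+1))
          = ∑ i ∈ range (d+1), ((2*d+1).choose (2*i) + (2*d+1).choose (2*i+1)) := by
        refine Finset.sum_congr rfl (fun i _ => ?_)
        rw [show 2*d+2 = (2*d+1)+1 by ring, Nat.choose_succ_succ']
      rw [e4, Finset.sum_add_distrib, h1, h2]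
      ring
    constructor
    · -- odd sum for 2d+3
      have e4 : (∑ i ∈ range (d+2), (2*(d+1)+1).choose (2*i+1))
          = ∑ i ∈ range (d+2), ((2*d+2).choose (2*i) + (2*d+2).choose (2*i+1)) := by
        refine Finset.sum_congr rfl (fun i _ => ?_)
        rw [show 2*(d+1)+1 = (2*d+2)+1 by ring, Nat.choose_succ_succ']
      have hEO2 : ∑ i ∈ range (d+2), (2*d+2).choose (2*i+1) = 2 * 4^d := by
        rw [Finset.sum_range_succ, hEO, Nat.choose_eq_zero_of_lt (by omega)]
        omega
      show ∑ i ∈ range (d+2), (2*(d+1)+1).choose (2*i+1) = 4^(d+1)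
      rw [e4, Finset.sum_add_distrib, hEE, hEO2]
      ring
    · -- even sum for 2d+3
      have e1 : ∑ i ∈ range (d+3), (2*(d+1)+1).choose (2*i)
          = (∑ i ∈ range (d+2), (2*(d+1)+1).choose (2*(i+1))) + (2*(d+1)+1).choose 0 :=
        Finset.sum_range_succ' _ _
      have e2 : ∑ i ∈ range (d+3), (2*(d+1)+1).choose (2*i)
          = (∑ i ∈ range (d+2), (2*(d+1)+1).choose (2*i)) + (2*(d+1)+1).choose (2*(d+2)) :=
        Finset.sum_range_succ _ _
      have e3 : (2*(d+1)+1).choose (2*(d+2)) = 0 := Nat.choose_eq_zero_of_lt (by omega)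
      have e4 : (∑ i ∈ range (d+2), (2*(d+1)+1).choose (2*(i+1)))
          = ∑ i ∈ range (d+2), ((2*d+2).choose (2*i+1) + (2*d+2).choose (2*i+2)) := by
        refine Finset.sum_congr rfl (fun i _ => ?_)
        rw [show 2*(i+1) = (2*i+1)+1 by ring, show 2*(d+1)+1 = (2*d+2)+1 by ring,
          Nat.choose_succ_succ']
      have hEO2 : ∑ i ∈ range (d+2), (2*d+2).choose (2*i+1) = 2 * 4^d := by
        rw [Finset.sum_range_succ, hEO, Nat.choose_eq_zero_of_lt (by omega)]
        omega
      have hEE2 : (∑ i ∈ range (d+2), (2*d+2).choose (2*i+2)) + 1 = 2 * 4^d := by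
        have f1 : ∑ i ∈ range (d+3), (2*d+2).choose (2*i)
            = (∑ i ∈ range (d+2), (2*d+2).choose (2*(i+1))) + (2*d+2).choose 0 :=
          Finset.sum_range_succ' _ _
        have f2 : ∑ i ∈ range (d+3), (2*d+2).choose (2*i)
            = (∑ i ∈ range (d+2), (2*d+2).choose (2*i)) + (2*d+2).choose (2*(d+2)) :=
          Finset.sum_range_succ _ _
        have f3 : (2*d+2).choose (2*(d+2)) = 0 := Nat.choose_eq_zero_of_lt (by omega)
        have f4 : (∑ i ∈ range (d+2), (2*d+2).choose (2*(i+1)))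
            = ∑ i ∈ range (d+2), (2*d+2).choose (2*i+2) :=
          Finset.sum_congr rfl (fun i _ => by ring_nf)
        simp only [Nat.choose_zero_right] at f1
        omega
      have e4' : (∑ i ∈ range (d+2), (2*(d+1)+1).choose (2*(i+1)))
          = (∑ i ∈ range (d+2), (2*d+2).choose (2*i+1))
            + ∑ i ∈ range (d+2), (2*d+2).choose (2*i+2) := by
        rw [e4, Finset.sum_add_distrib]
      simp only [Nat.choose_zero_right] at e1
      have hp : (4:ℕ)^(d+1) = 4 * 4^d := by ring
      show ∑ i ∈ range (d+2), (2*(d+1)+1).choose (2*i) = 4^(d+1)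
      omega

lemma sum_choose_OO (d : ℕ) : ∑ i ∈ range (d+1), (2*d+1).choose (2*i+1) = 4^d :=
  (choose_odd_sums d).1

lemma sum_choose_OE (d : ℕ) : ∑ i ∈ range (d+1), (2*d+1).choose (2*i) = 4^d :=
  (choose_odd_sums d).2

lemma sum_choose_EO (d : ℕ) : ∑ i ∈ range (d+1), (2*d+2).choose (2*i+1) = 2 * 4^d := by
  have e4 : (∑ i ∈ range (d+1), (2*d+2).choose (2*i+1))
      = ∑ i ∈ range (d+1), ((2*d+1).choose (2*i) + (2*d+1).choose (2*i+1)) := by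
    refine Finset.sum_congr rfl (fun i _ => ?_)
    rw [show 2*d+2 = (2*d+1)+1 by ring, Nat.choose_succ_succ']
  rw [e4, Finset.sum_add_distrib, sum_choose_OO, sum_choose_OE]
  ring

lemma sum_choose_EEp (d : ℕ) : (∑ i ∈ range (d+1), (2*d+2).choose (2*i)) + 1 = 2 * 4^d := by
  have hEE : ∑ i ∈ range (d+2), (2*d+2).choose (2*i) = 2 * 4^d := by
    have e1 : ∑ i ∈ range (d+2), (2*d+2).choose (2*i)
        = (∑ i ∈ range (d+1), (2*d+2).choose (2*(i+1))) + (2*d+2).choose 0 :=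
      Finset.sum_range_succ' _ _
    have e4 : (∑ i ∈ range (d+1), (2*d+2).choose (2*(i+1)))
        = ∑ i ∈ range (d+1), ((2*d+1).choose (2*i+1) + (2*d+1).choose (2*i+2)) := by
      refine Finset.sum_congr rfl (fun i _ => ?_)
      rw [show 2*(i+1) = (2*i+1)+1 by ring, show 2*d+2 = (2*d+1)+1 by ring,
        Nat.choose_succ_succ']
    have hshift : (∑ i ∈ range (d+1), (2*d+1).choose (2*i+2)) + 1 = 4^d := by
      have f1 : ∑ i ∈ range (d+2), (2*d+1).choose (2*i)
          = (∑ i ∈ range (d+1), (2*d+1).choose (2*(i+1))) + (2*d+1).choose 0 :=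
        Finset.sum_range_succ' _ _
      have f2 : ∑ i ∈ range (d+2), (2*d+1).choose (2*i)
          = (∑ i ∈ range (d+1), (2*d+1).choose (2*i)) + (2*d+1).choose (2*(d+1)) :=
        Finset.sum_range_succ _ _
      have f3 : (2*d+1).choose (2*(d+1)) = 0 := Nat.choose_eq_zero_of_lt (by omega)
      have f4 : (∑ i ∈ range (d+1), (2*d+1).choose (2*(i+1)))
          = ∑ i ∈ range (d+1), (2*d+1).choose (2*i+2) :=
        Finset.sum_congr rfl (fun i _ => by ring_nf)
      have := sum_choose_OE d
      simp only [Nat.choose_zero_right] at f1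
      omega
    rw [e4, Finset.sum_add_distrib, sum_choose_OO] at e1
    simp only [Nat.choose_zero_right] at e1
    omega
  have e2 : ∑ i ∈ range (d+2), (2*d+2).choose (2*i)
      = (∑ i ∈ range (d+1), (2*d+2).choose (2*i)) + (2*d+2).choose (2*(d+1)) :=
    Finset.sum_range_succ _ _
  have e3 : (2*d+2).choose (2*(d+1)) = 1 := by
    rw [show 2*(d+1) = 2*d+2 by ring, Nat.choose_self]
  omega


open Finset Polynomial

section helpers
variable {M : Type*} [AddCommMonoid M]

lemma sum_tri {n : ℕ} (g : ℕ → ℕ → M) (h : ∀ k j, k < j → g k j = 0) :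
    ∑ k ∈ range n, ∑ j ∈ range (k+1), g k j = ∑ j ∈ range n, ∑ k ∈ range n, g k j := by
  refine Eq.trans ?_ Finset.sum_comm
  refine Finset.sum_congr rfl (fun k hk => ?_)
  refine Finset.sum_subset ?_ ?_
  · exact Finset.range_subset_range.mpr (Finset.mem_range.mp hk)
  · intro j hj hj'
    simp only [Finset.mem_range] at hj hj'
    exact h k j (by omega)

lemma sum_lower {n j : ℕ} (hj : j ≤ n) (g : ℕ → M) (h : ∀ k, k < j → g k = 0) :
    ∑ k ∈ range n, g k = ∑ i ∈ range (n - j), g (j + i) := by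
  rw [← Finset.sum_Ico_eq_sum_range, Finset.range_eq_Ico]
  refine (Finset.sum_subset ?_ ?_).symm
  · exact Finset.Ico_subset_Ico (Nat.zero_le _) le_rfl
  · intro k hk hk'
    simp only [Finset.mem_Ico] at hk hk'
    exact h k (by omega)

end helpers

/-- The polynomial sequence: `P (n+1) = X² Pₙ'' − (2X² − X) Pₙ' − X Pₙ`. -/
noncomputable def Pp : ℕ → Polynomial ℝ
  | 0 => 1
  | (n+1) => X^2 * derivative (derivative (Pp n)) - (2*X^2 - X) * derivative (Pp n) - X * Pp n

/-- Binomial coefficient as a real polynomial (constant). -/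
noncomputable def cc (a b : ℕ) : Polynomial ℝ := (a.choose b : ℕ)

lemma cc_zero_of_lt {a b : ℕ} (h : a < b) : cc a b = 0 := by
  simp [cc, Nat.choose_eq_zero_of_lt h]

lemma cc_self (a : ℕ) : cc a a = 1 := by simp [cc]

lemma cc_zero_right (a : ℕ) : cc a 0 = 1 := by simp [cc]

lemma cc_pascal (a b : ℕ) : cc (a+1) (b+1) = cc a b + cc a (b+1) := by
  simp [cc, Nat.choose_succ_succ']

/-- `Main n`: the derivative formula. -/
def MainS (n : ℕ) : Prop :=
  derivative (Pp n) = -∑ k ∈ range n, cc (2*n) (2*k) * Pp k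

/-- `Comp n`: the companion formula. -/
def CompS (n : ℕ) : Prop :=
  Pp (n+1) = -(X * ∑ k ∈ range (n+1), cc (2*n+1) (2*k) * Pp k)

lemma cc_deriv_mul (a b : ℕ) (q : Polynomial ℝ) :
    derivative (cc a b * q) = cc a b * derivative q := by
  unfold cc
  rw [← Polynomial.C_eq_natCast, derivative_C_mul]

lemma cc_split {N j i : ℕ} (m : ℕ) (h1 : m ≤ N) (h2 : 2*j ≤ m) (h3 : m - 2*j = i) :
    cc N m * cc m (2*j) = cc N (2*j) * cc (N - 2*j) i := by
  have h := Nat.choose_mul (n := N) (k := m) (s := 2*j) h2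
  unfold cc
  rw [← Nat.cast_mul, ← Nat.cast_mul, h, h3]

lemma comp_step (n : ℕ) (hmain : ∀ m, m ≤ n → MainS m) (hcomp : ∀ m, m < n → CompS m) :
    CompS n := by
  unfold CompS
  -- abbreviations
  set S2 := ∑ k ∈ range n, cc (2*n) (2*k) * Pp k with hS2
  have hd : derivative (Pp n) = -S2 := hmain n le_rfl
  -- the coefficient sums (as ℕ)
  -- T : the double-sum expansion of the second derivative plus S2
  set T := ∑ j ∈ range n,
      (cc (2*n) (2*j) * ((∑ i ∈ range (n-j), (2*(n-j)).choose (2*i) : ℕ) : Polynomial ℝ))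
        * Pp j with hT
  have hdd : derivative (derivative (Pp n)) = T - S2 := by
    rw [hd, derivative_neg, derivative_sum]
    have e1 : ∀ k ∈ range n, derivative (cc (2*n) (2*k) * Pp k)
        = -∑ j ∈ range k, cc (2*n) (2*k) * (cc (2*k) (2*j) * Pp j) := by
      intro k hk
      rw [cc_deriv_mul, hmain k (le_of_lt (mem_range.mp hk)), mul_neg, Finset.mul_sum]
    rw [Finset.sum_congr rfl e1, Finset.sum_neg_distrib, neg_neg]
    -- now: ∑ k ∈ range n, ∑ j ∈ range k, G k j = T - S2
    have e2 : ∀ k ∈ range n, ∑ j ∈ range k, cc (2*n) (2*k) * (cc (2*k) (2*j) * Pp j)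
        = (∑ j ∈ range (k+1), cc (2*n) (2*k) * (cc (2*k) (2*j) * Pp j))
          - cc (2*n) (2*k) * Pp k := by
      intro k _
      rw [Finset.sum_range_succ, cc_self, one_mul]
      ring
    rw [Finset.sum_congr rfl e2, Finset.sum_sub_distrib]
    have e3 : ∑ k ∈ range n, ∑ j ∈ range (k+1), cc (2*n) (2*k) * (cc (2*k) (2*j) * Pp j)
        = ∑ j ∈ range n, ∑ k ∈ range n, cc (2*n) (2*k) * (cc (2*k) (2*j) * Pp j) :=
      sum_tri _ (fun k j hkj => by simp [cc_zero_of_lt (show 2*k < 2*j by omega)])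
    rw [e3, ← hS2]
    congr 1
    refine Finset.sum_congr rfl (fun j hj => ?_)
    have hjn : j < n := mem_range.mp hj
    -- inner sum over k
    have e4 : ∑ k ∈ range n, cc (2*n) (2*k) * (cc (2*k) (2*j) * Pp j)
        = ∑ i ∈ range (n-j), cc (2*n) (2*(j+i)) * (cc (2*(j+i)) (2*j) * Pp j) :=
      sum_lower (le_of_lt hjn) _
        (fun k hk => by simp [cc_zero_of_lt (show 2*k < 2*j by omega)])
    rw [e4]
    have e5 : ∀ i ∈ range (n-j), cc (2*n) (2*(j+i)) * (cc (2*(j+i)) (2*j) * Pp j)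
        = cc (2*n) (2*j) * (cc (2*(n-j)) (2*i) * Pp j) := by
      intro i hi
      have hi' : i < n - j := mem_range.mp hi
      have hs := cc_split (N := 2*n) (j := j) (i := 2*i) (m := 2*(j+i))
        (by omega) (by omega) (by omega)
      rw [← mul_assoc, hs, show 2*n - 2*j = 2*(n-j) by omega, mul_assoc]
    rw [Finset.sum_congr rfl e5, ← Finset.mul_sum, ← Finset.sum_mul]
    have e6 : ∑ i ∈ range (n-j), cc (2*(n-j)) (2*i)
        = ((∑ i ∈ range (n-j), (2*(n-j)).choose (2*i) : ℕ) : Polynomial ℝ) := by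
      push_cast [cc]
      rfl
    rw [e6, mul_assoc]
  -- rewrite Pp (n+1) via the recurrence
  have hrec : Pp (n+1)
      = X^2 * derivative (derivative (Pp n)) - (2*X^2 - X) * derivative (Pp n) - X * Pp n := rfl
  -- the simplified middle sum
  set V := ∑ j ∈ range n,
      (cc (2*n) (2*j) * ((2 * 4^(n-j-1) : ℕ) : Polynomial ℝ)) * Pp j with hV
  have hTS : T + S2 = V := by
    rw [hT, hS2, hV, ← Finset.sum_add_distrib]
    refine Finset.sum_congr rfl (fun j hj => ?_)
    have hjn : j < n := mem_range.mp hj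
    have hnj : n - j = (n-j-1) + 1 := by omega
    have hEEp := sum_choose_EEp (n-j-1)
    rw [show 2*(n-j-1)+2 = 2*(n-j) by omega] at hEEp
    rw [← hnj] at hEEp
    have hcast : ((∑ i ∈ range (n-j), (2*(n-j)).choose (2*i) : ℕ) : Polynomial ℝ) + 1
        = ((2 * 4^(n-j-1) : ℕ) : Polynomial ℝ) := by exact_mod_cast hEEp
    rw [← hcast]
    ring
  set M := ∑ m ∈ range n, cc (2*n) (2*m+1) * Pp (m+1) with hM
  have hXV : X * V = -M := by
    have h1 : ∀ j ∈ range n, X * ((cc (2*n) (2*j) * ((2 * 4^(n-j-1) : ℕ) : Polynomial ℝ)) * Pp j)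
        = ∑ i ∈ range (n-j), cc (2*n) (2*(j+i)+1) * (cc (2*(j+i)+1) (2*j) * (X * Pp j)) := by
      intro j hj
      have hjn : j < n := mem_range.mp hj
      have hEO := sum_choose_EO (n-j-1)
      rw [show 2*(n-j-1)+2 = 2*(n-j) by omega, show (n-j-1)+1 = n-j by omega] at hEO
      have hcast : ((2 * 4^(n-j-1) : ℕ) : Polynomial ℝ)
          = ∑ i ∈ range (n-j), cc (2*(n-j)) (2*i+1) := by
        rw [← hEO]; push_cast [cc]; rfl
      rw [hcast, Finset.mul_sum, Finset.sum_mul, Finset.mul_sum]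
      refine Finset.sum_congr rfl (fun i hi => ?_)
      have hi' : i < n - j := mem_range.mp hi
      have hs := cc_split (N := 2*n) (j := j) (i := 2*i+1) (m := 2*(j+i)+1)
        (by omega) (by omega) (by omega)
      rw [← mul_assoc (cc (2*n) (2*(j+i)+1)), hs, show 2*n - 2*j = 2*(n-j) by omega]
      ring
    rw [hV, Finset.mul_sum, Finset.sum_congr rfl h1]
    -- un-truncate inner sums
    have h2 : ∀ j ∈ range n,
        ∑ i ∈ range (n-j), cc (2*n) (2*(j+i)+1) * (cc (2*(j+i)+1) (2*j) * (X * Pp j))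
        = ∑ m ∈ range n, cc (2*n) (2*m+1) * (cc (2*m+1) (2*j) * (X * Pp j)) := by
      intro j hj
      exact (sum_lower (le_of_lt (mem_range.mp hj))
        (fun m => cc (2*n) (2*m+1) * (cc (2*m+1) (2*j) * (X * Pp j)))
        (fun m hm => by simp [cc_zero_of_lt (show 2*m+1 < 2*j by omega)])).symm
    rw [Finset.sum_congr rfl h2]
    -- swap the double sum
    have h3 : ∑ m ∈ range n, ∑ j ∈ range (m+1), cc (2*n) (2*m+1) * (cc (2*m+1) (2*j) * (X * Pp j))
        = ∑ j ∈ range n, ∑ m ∈ range n, cc (2*n) (2*m+1) * (cc (2*m+1) (2*j) * (X * Pp j)) :=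
      sum_tri _ (fun m j hmj => by simp [cc_zero_of_lt (show 2*m+1 < 2*j by omega)])
    rw [← h3]
    -- apply the companion identity at each m < n
    have h4 : ∀ m ∈ range n, ∑ j ∈ range (m+1), cc (2*n) (2*m+1) * (cc (2*m+1) (2*j) * (X * Pp j))
        = -(cc (2*n) (2*m+1) * Pp (m+1)) := by
      intro m hm
      have hc := hcomp m (mem_range.mp hm)
      unfold CompS at hc
      have : ∑ j ∈ range (m+1), cc (2*m+1) (2*j) * (X * Pp j)
          = X * ∑ j ∈ range (m+1), cc (2*m+1) (2*j) * Pp j := by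
        rw [Finset.mul_sum]; exact Finset.sum_congr rfl (fun j _ => by ring)
      rw [← Finset.mul_sum, this, show X * ∑ j ∈ range (m+1), cc (2*m+1) (2*j) * Pp j
          = -Pp (m+1) by rw [hc]; ring]
      ring
    rw [Finset.sum_congr rfl h4, hM, ← Finset.sum_neg_distrib]
  -- final assembly
  have hfin : ∑ k ∈ range (n+1), cc (2*n+1) (2*k) * Pp k = M + (S2 + Pp n) := by
    have a1 : ∑ k ∈ range (n+1), cc (2*n+1) (2*k) * Pp k
        = (∑ i ∈ range n, cc (2*n+1) (2*(i+1)) * Pp (i+1)) + cc (2*n+1) (2*0) * Pp 0 :=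
      Finset.sum_range_succ' _ _
    have a2 : S2 + Pp n = ∑ k ∈ range (n+1), cc (2*n) (2*k) * Pp k := by
      rw [Finset.sum_range_succ, cc_self, one_mul, hS2]
    have a3 : ∑ k ∈ range (n+1), cc (2*n) (2*k) * Pp k
        = (∑ i ∈ range n, cc (2*n) (2*(i+1)) * Pp (i+1)) + cc (2*n) (2*0) * Pp 0 :=
      Finset.sum_range_succ' _ _
    have a4 : ∀ i ∈ range n, cc (2*n+1) (2*(i+1)) * Pp (i+1)
        = cc (2*n) (2*i+1) * Pp (i+1) + cc (2*n) (2*(i+1)) * Pp (i+1) := by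
      intro i _
      rw [show 2*(i+1) = (2*i+1)+1 by ring, cc_pascal]
      ring
    rw [a1, Finset.sum_congr rfl a4, Finset.sum_add_distrib, a2, a3, hM]
    simp [cc_zero_right]
    ring
  rw [hrec, hdd, hd, hfin]
  have : X^2 * (T - S2) - (2*X^2 - X) * -S2 - X * Pp n
      = X * (X * (T + S2)) - X * S2 - X * Pp n := by ring
  rw [this, hTS, hXV]
  ring

lemma main_zero : MainS 0 := by
  unfold MainS
  simp [Pp]

lemma main_succ (n : ℕ) (hmain : ∀ m, m ≤ n → MainS m) (hcomp : ∀ m, m ≤ n → CompS m) :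
    MainS (n+1) := by
  unfold MainS
  set S := ∑ k ∈ range (n+1), cc (2*n+1) (2*k) * Pp k with hS
  have hP : Pp (n+1) = -(X * S) := hcomp n le_rfl
  set U := ∑ j ∈ range (n+1), (cc (2*n+1) (2*j) * ((4^(n-j) : ℕ) : Polynomial ℝ)) * Pp j with hU
  have hdS : derivative S = -(U - S) := by
    rw [hS, derivative_sum]
    have e1 : ∀ k ∈ range (n+1), derivative (cc (2*n+1) (2*k) * Pp k)
        = -∑ j ∈ range k, cc (2*n+1) (2*k) * (cc (2*k) (2*j) * Pp j) := by
      intro k hk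
      rw [cc_deriv_mul, hmain k (Nat.lt_succ_iff.mp (mem_range.mp hk)), mul_neg, Finset.mul_sum]
    rw [Finset.sum_congr rfl e1, Finset.sum_neg_distrib]
    have e2 : ∀ k ∈ range (n+1), ∑ j ∈ range k, cc (2*n+1) (2*k) * (cc (2*k) (2*j) * Pp j)
        = (∑ j ∈ range (k+1), cc (2*n+1) (2*k) * (cc (2*k) (2*j) * Pp j))
          - cc (2*n+1) (2*k) * Pp k := by
      intro k _
      rw [Finset.sum_range_succ, cc_self, one_mul]
      ring
    rw [Finset.sum_congr rfl e2, Finset.sum_sub_distrib]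
    have e3 : ∑ k ∈ range (n+1), ∑ j ∈ range (k+1), cc (2*n+1) (2*k) * (cc (2*k) (2*j) * Pp j)
        = ∑ j ∈ range (n+1), ∑ k ∈ range (n+1), cc (2*n+1) (2*k) * (cc (2*k) (2*j) * Pp j) :=
      sum_tri _ (fun k j hkj => by simp [cc_zero_of_lt (show 2*k < 2*j by omega)])
    rw [e3, ← hS]
    congr 1
    congr 1
    refine Finset.sum_congr rfl (fun j hj => ?_)
    have hjn : j ≤ n := Nat.lt_succ_iff.mp (mem_range.mp hj)
    have e4 : ∑ k ∈ range (n+1), cc (2*n+1) (2*k) * (cc (2*k) (2*j) * Pp j)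
        = ∑ i ∈ range (n+1-j), cc (2*n+1) (2*(j+i)) * (cc (2*(j+i)) (2*j) * Pp j) :=
      sum_lower (by omega) _
        (fun k hk => by simp [cc_zero_of_lt (show 2*k < 2*j by omega)])
    rw [e4]
    have e5 : ∀ i ∈ range (n+1-j), cc (2*n+1) (2*(j+i)) * (cc (2*(j+i)) (2*j) * Pp j)
        = cc (2*n+1) (2*j) * (cc (2*(n-j)+1) (2*i) * Pp j) := by
      intro i hi
      have hi' : i < n+1-j := mem_range.mp hi
      have hs := cc_split (N := 2*n+1) (j := j) (i := 2*i) (m := 2*(j+i))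
        (by omega) (by omega) (by omega)
      rw [← mul_assoc, hs, show 2*n+1 - 2*j = 2*(n-j)+1 by omega, mul_assoc]
    rw [Finset.sum_congr rfl e5, ← Finset.mul_sum, ← Finset.sum_mul]
    have hOE := sum_choose_OE (n-j)
    rw [show (n-j)+1 = n+1-j by omega] at hOE
    have e6 : ∑ i ∈ range (n+1-j), cc (2*(n-j)+1) (2*i)
        = ((4^(n-j) : ℕ) : Polynomial ℝ) := by
      rw [← hOE]; push_cast [cc]; rfl
    rw [e6, mul_assoc]
  set M := ∑ m ∈ range (n+1), cc (2*n+1) (2*m+1) * Pp (m+1) with hM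
  have hXU : X * U = -M := by
    have h1 : ∀ j ∈ range (n+1), X * ((cc (2*n+1) (2*j) * ((4^(n-j) : ℕ) : Polynomial ℝ)) * Pp j)
        = ∑ i ∈ range (n+1-j), cc (2*n+1) (2*(j+i)+1) * (cc (2*(j+i)+1) (2*j) * (X * Pp j)) := by
      intro j hj
      have hjn : j ≤ n := Nat.lt_succ_iff.mp (mem_range.mp hj)
      have hOO := sum_choose_OO (n-j)
      rw [show (n-j)+1 = n+1-j by omega] at hOO
      have hcast : ((4^(n-j) : ℕ) : Polynomial ℝ)
          = ∑ i ∈ range (n+1-j), cc (2*(n-j)+1) (2*i+1) := by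
        rw [← hOO]; push_cast [cc]; rfl
      rw [hcast, Finset.mul_sum, Finset.sum_mul, Finset.mul_sum]
      refine Finset.sum_congr rfl (fun i hi => ?_)
      have hi' : i < n+1-j := mem_range.mp hi
      have hs := cc_split (N := 2*n+1) (j := j) (i := 2*i+1) (m := 2*(j+i)+1)
        (by omega) (by omega) (by omega)
      rw [← mul_assoc (cc (2*n+1) (2*(j+i)+1)), hs, show 2*n+1 - 2*j = 2*(n-j)+1 by omega]
      ring
    rw [hU, Finset.mul_sum, Finset.sum_congr rfl h1]
    have h2 : ∀ j ∈ range (n+1),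
        ∑ i ∈ range (n+1-j), cc (2*n+1) (2*(j+i)+1) * (cc (2*(j+i)+1) (2*j) * (X * Pp j))
        = ∑ m ∈ range (n+1), cc (2*n+1) (2*m+1) * (cc (2*m+1) (2*j) * (X * Pp j)) := by
      intro j hj
      have hjn : j < n+1 := mem_range.mp hj
      exact (sum_lower (by omega : j ≤ n+1)
        (fun m => cc (2*n+1) (2*m+1) * (cc (2*m+1) (2*j) * (X * Pp j)))
        (fun m hm => by simp [cc_zero_of_lt (show 2*m+1 < 2*j by omega)])).symm
    rw [Finset.sum_congr rfl h2]
    have h3 : ∑ m ∈ range (n+1), ∑ j ∈ range (m+1),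
          cc (2*n+1) (2*m+1) * (cc (2*m+1) (2*j) * (X * Pp j))
        = ∑ j ∈ range (n+1), ∑ m ∈ range (n+1),
          cc (2*n+1) (2*m+1) * (cc (2*m+1) (2*j) * (X * Pp j)) :=
      sum_tri _ (fun m j hmj => by simp [cc_zero_of_lt (show 2*m+1 < 2*j by omega)])
    rw [← h3]
    have h4 : ∀ m ∈ range (n+1),
        ∑ j ∈ range (m+1), cc (2*n+1) (2*m+1) * (cc (2*m+1) (2*j) * (X * Pp j))
        = -(cc (2*n+1) (2*m+1) * Pp (m+1)) := by
      intro m hm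
      have hc := hcomp m (Nat.lt_succ_iff.mp (mem_range.mp hm))
      unfold CompS at hc
      have : ∑ j ∈ range (m+1), cc (2*m+1) (2*j) * (X * Pp j)
          = X * ∑ j ∈ range (m+1), cc (2*m+1) (2*j) * Pp j := by
        rw [Finset.mul_sum]; exact Finset.sum_congr rfl (fun j _ => by ring)
      rw [← Finset.mul_sum, this, show X * ∑ j ∈ range (m+1), cc (2*m+1) (2*j) * Pp j
          = -Pp (m+1) by rw [hc]; ring]
      ring
    rw [Finset.sum_congr rfl h4, hM, ← Finset.sum_neg_distrib]
  -- assemble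
  have hD : derivative (Pp (n+1)) = -S - M + Pp (n+1) := by
    rw [hP, derivative_neg, derivative_mul, derivative_X, hdS]
    have : -(1 * S + X * -(U - S)) = -S + X * U - (X * S) := by ring
    rw [this, hXU, show X * S = -Pp (n+1) by rw [hP]; ring]
    ring
  -- peel the top of M
  have hMtop : M = (∑ m ∈ range n, cc (2*n+1) (2*m+1) * Pp (m+1)) + Pp (n+1) := by
    rw [hM, Finset.sum_range_succ, show 2*n+1 = 2*n+1 from rfl, cc_self, one_mul]
  rw [hD, hMtop]
  have hfin : ∑ k ∈ range (n+1), cc (2*(n+1)) (2*k) * Pp k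
      = S + ∑ m ∈ range n, cc (2*n+1) (2*m+1) * Pp (m+1) := by
    have a1 : ∑ k ∈ range (n+1), cc (2*(n+1)) (2*k) * Pp k
        = (∑ i ∈ range n, cc (2*(n+1)) (2*(i+1)) * Pp (i+1)) + cc (2*(n+1)) (2*0) * Pp 0 :=
      Finset.sum_range_succ' _ _
    have a2 : S = (∑ i ∈ range n, cc (2*n+1) (2*(i+1)) * Pp (i+1)) + cc (2*n+1) (2*0) * Pp 0 :=
      Finset.sum_range_succ' _ _
    have a4 : ∀ i ∈ range n, cc (2*(n+1)) (2*(i+1)) * Pp (i+1)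
        = cc (2*n+1) (2*i+1) * Pp (i+1) + cc (2*n+1) (2*(i+1)) * Pp (i+1) := by
      intro i _
      rw [show 2*(n+1) = (2*n+1)+1 by ring, show 2*(i+1) = (2*i+1)+1 by ring, cc_pascal]
      ring
    rw [a1, Finset.sum_congr rfl a4, Finset.sum_add_distrib, a2]
    simp [cc_zero_right]
    ring
  rw [hfin]
  ring

lemma main_and_comp : ∀ n, MainS n ∧ CompS n := by
  intro n
  induction n using Nat.strong_induction_on with
  | _ n ih =>
    have hm : MainS n := by
      match n, ih with
      | 0, _ => exact main_zero
      | (k+1), ih =>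
        exact main_succ k (fun m hm' => (ih m (by omega)).1) (fun m hm' => (ih m (by omega)).2)
    refine ⟨hm, comp_step n (fun m hm' => ?_) (fun m hm' => (ih m hm').2)⟩
    rcases eq_or_lt_of_le hm' with rfl | h
    · exact hm
    · exact (ih m h).1

lemma main_all (n : ℕ) :
    derivative (Pp n) = -∑ k ∈ range n, cc (2*n) (2*k) * Pp k :=
  (main_and_comp n).1

lemma deriv_poly_exp (c : ℝ) (q : Polynomial ℝ) :
    deriv (fun y => c * (q.eval y * Real.exp (-y)))
      = fun y => c * ((derivative q - q).eval y * Real.exp (-y)) := by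
  funext y
  have h1 : HasDerivAt (fun y : ℝ => q.eval y) (q.derivative.eval y) y := q.hasDerivAt y
  have h2 : HasDerivAt (fun y : ℝ => Real.exp (-y)) (Real.exp (-y) * (-1)) y :=
    ((hasDerivAt_id y).neg).exp
  have h3 := (h1.mul h2).const_mul c
  rw [show deriv (fun y => c * (q.eval y * Real.exp (-y))) y = _ from h3.deriv]
  simp only [eval_sub]
  ring

lemma opA_poly (c : ℝ) (q : Polynomial ℝ) :
    opA (fun y => c * (q.eval y * Real.exp (-y)))
      = fun x => (-c) * ((X^2 * derivative (derivative q)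
          - (2*X^2 - X) * derivative q - X * q).eval x * Real.exp (-x)) := by
  funext x
  unfold opA
  rw [deriv_poly_exp]
  have hfun : (fun y : ℝ => y * (c * ((derivative q - q).eval y * Real.exp (-y))))
      = fun y => c * ((X * (derivative q - q)).eval y * Real.exp (-y)) := by
    funext y
    simp only [eval_mul, eval_X]
    ring
  rw [hfun, deriv_poly_exp]
  simp only [derivative_mul, derivative_X, derivative_sub, eval_sub, eval_add, eval_mul,
    eval_X, eval_pow, eval_one, eval_ofNat, one_mul]
  ring

lemma iter_opA (n : ℕ) : (opA^[n] (fun y => Real.exp (-y)))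
    = fun x => ((-1:ℝ)^n) * ((Pp n).eval x * Real.exp (-x)) := by
  induction n with
  | zero => funext x; simp [Pp]
  | succ n ih =>
    rw [Function.iterate_succ_apply', ih, opA_poly]
    funext x
    rw [show Pp (n+1) = X^2 * derivative (derivative (Pp n))
        - (2*X^2 - X) * derivative (Pp n) - X * Pp n from rfl]
    rw [pow_succ]
    ring


lemma p_eq (n : ℕ) (x : ℝ) : p n x = (Pp n).eval x := by
  unfold p
  rw [iter_opA]
  have h1 : Real.exp x * Real.exp (-x) = 1 := by
    rw [← Real.exp_add]; simp
  have h2 : ((-1:ℝ)^n) * (-1:ℝ)^n = 1 := by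
    rw [← pow_add, ← two_mul, pow_mul]; norm_num
  have h3 : (-1:ℝ)^n * Real.exp x * ((-1:ℝ)^n * ((Pp n).eval x * Real.exp (-x)))
      = (((-1:ℝ)^n * (-1:ℝ)^n) * (Real.exp x * Real.exp (-x))) * (Pp n).eval x := by ring
  rw [h3, h1, h2]
  ring

theorem p_deriv (n : ℕ) (hn : 1 ≤ n) (x : ℝ) :
    deriv (p n) x = -∑ k ∈ Finset.range n, ((2*n).choose (2*k) : ℝ) * p k x := by
  have hp : p n = fun y => (Pp n).eval y := funext (p_eq n)
  rw [hp, Polynomial.deriv, main_all n, eval_neg, eval_finset_sum]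
  simp only [eval_mul, cc, eval_natCast, p_eq]
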